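/- Let w ∈ ℤ_{≥1}^n and let J be a nonempty finite set of positive integers; for each i ∈ J let r_i ≥ 1 and let f_{ij} ∈ ℂ[x_1,…,x_n] (1 ≤ j ≤ r_i) be nonconstant with deg_w(f_{ij}) = i; set r = Σ r_i. Let F_{ijw} be the w-weighted homogeneous part of f_{ij} of w-degree i, and assume the family {F_{ijw} : i ∈ J, 1 ≤ j ≤ r_i} is linearly independent over ℂ. Let a = (a_{ij}) ∈ ℂ^r ∖ {0}, let g_a = Σ_{i,j} a_{ij} f_{ij}, let ℓ = deg_w(g_a), and let g̃_{a,w} be the w-weighted homogeneous part of g_a of w-degree ℓ. Then ℓ ∈ J, and the common zero locus in ℂ^n of the partial derivatives ∂g̃_{a,w}/∂x_1, …, ∂g̃_{a,w}/∂x_n has dimension at most s_{wℓ} := dim BSing(F_{ℓ1w},…,F_{ℓ r_ℓ w}). -/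

import Mathlib

open MvPolynomial

/-- The vanishing ideal of a subset `S ⊆ K^σ` inside the polynomial ring. -/
def vIdeal {σ : Type} {K : Type} [CommRing K] (S : Set (σ → K)) :
    Ideal (MvPolynomial σ K) where
  carrier := {f | ∀ x ∈ S, MvPolynomial.eval x f = 0}
  add_mem' := by
    intro a b ha hb x hx
    simp [ha x hx, hb x hx]
  zero_mem' := by
    intro x hx
    simp
  smul_mem' := by
    intro c a ha x hx
    simp [smul_eq_mul, ha x hx]

-- Dimension of a subset `S ⊆ K^σ`: the Krull dimension of `K[x]/I(S)`, with `dim ∅ = -1`.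
open Classical in
noncomputable def zdim {σ : Type} {K : Type} [CommRing K] (S : Set (σ → K)) : ℤ :=
  if S = ∅ then -1
  else (ENat.toNat (WithBot.unbotD 0 (ringKrullDim (MvPolynomial σ K ⧸ vIdeal S))) : ℤ)

/-- The Birch singular locus of a family of polynomials: points where the Jacobian
matrix has rank `< s`. -/
noncomputable def BSing {n s : ℕ} {K : Type} [CommRing K]
    (G : Fin s → MvPolynomial (Fin n) K) : Set (Fin n → K) :=
  {x | (Matrix.of fun (i : Fin s) (j : Fin n) =>
      MvPolynomial.eval x (MvPolynomial.pderiv j (G i))).rank < s}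


namespace Stmt17Aux

variable {R : Type*} [CommRing R]

/-- The Coquand–Lombardi nested expression. -/
def nest : (k : ℕ) → (Fin k → R) → (Fin k → ℕ) → (Fin k → R) → R
  | 0, _, _, _ => 1
  | (k+1), x, m, b =>
      x 0 ^ m 0 *
        (nest k (fun i => x i.succ) (fun i => m i.succ) (fun i => b i.succ) + b 0 * x 0)

theorem nest_not_mem {k : ℕ} (P : Fin (k+1) → Ideal R) (hprime : ∀ i, (P i).IsPrime)
    (hmono : ∀ i : Fin k, P i.castSucc ≤ P i.succ)
    (x : Fin k → R) (m : Fin k → ℕ) (b : Fin k → R)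
    (hx1 : ∀ i : Fin k, x i ∈ P i.succ) (hx2 : ∀ i : Fin k, x i ∉ P i.castSucc) :
    nest k x m b ∉ P 0 := by
  induction k with
  | zero =>
    simp only [nest]
    exact fun h => (hprime 0).ne_top (Ideal.eq_top_of_isUnit_mem _ h isUnit_one)
  | succ k ih =>
    intro hmem
    simp only [nest] at hmem
    have hx0 : x 0 ∉ P 0 := by simpa using hx2 0
    rcases (hprime 0).mem_or_mem hmem with h | h
    · exact hx0 ((hprime 0).mem_of_pow_mem _ h)
    · -- h : nest' + b 0 * x 0 ∈ P 0
      have h01 : P 0 ≤ P 1 := by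
        have := hmono 0
        simpa using this
      have hx01 : x 0 ∈ P 1 := by simpa using hx1 0
      have hnest' : nest k (fun i => x i.succ) (fun i => m i.succ) (fun i => b i.succ)
          ∈ P 1 := by
        have : nest k (fun i => x i.succ) (fun i => m i.succ) (fun i => b i.succ)
            = (nest k (fun i => x i.succ) (fun i => m i.succ) (fun i => b i.succ)
              + b 0 * x 0) - b 0 * x 0 := by ring
        rw [this]
        exact Ideal.sub_mem _ (h01 h) (Ideal.mul_mem_left _ _ hx01)
      refine ih (fun j => P j.succ) (fun j => hprime _) ?_ (fun i => x i.succ) (fun i => m i.succ) (fun i => b i.succ) (fun i => hx1 i.succ) ?_ ?_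
      · intro i
        have := hmono i.succ
        rwa [← Fin.succ_castSucc] at this
      · intro i
        have := hx2 i.succ
        rwa [← Fin.succ_castSucc] at this
      · simpa using hnest'
theorem CL_dim_le {n : ℕ}
    (H : ∀ x : Fin (n+1) → R, ∃ m b, nest (n+1) x m b = 0) :
    ringKrullDim R ≤ (n : WithBot ℕ∞) := by
  rw [ringKrullDim, Order.krullDim]
  refine iSup_le fun p => ?_
  have hlen : p.length ≤ n := by
    by_contra hc
    push_neg at hc
    have hle : n + 2 ≤ p.length + 1 := by omega
    set P : Fin (n+2) → Ideal R := fun i => (p.toFun (Fin.castLE hle i)).asIdeal with hP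
    have hmonoP : StrictMono P := by
      intro i j hij
      apply p.strictMono
      rw [Fin.lt_def] at hij ⊢
      exact hij
    have hx : ∀ i : Fin (n+1), ∃ y, y ∈ P i.succ ∧ y ∉ P i.castSucc := by
      intro i
      exact SetLike.exists_of_lt (hmonoP (by simp [Fin.lt_def]))
    choose x hx1 hx2 using hx
    obtain ⟨m, b, hnb⟩ := H x
    exact nest_not_mem P (fun i => (p.toFun _).isPrime)
      (fun i => (hmonoP (by simp [Fin.lt_def])).le) x m b hx1 hx2
      (hnb ▸ (P 0).zero_mem)
  exact_mod_cast Nat.cast_le.mpr hlen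
theorem nest_closed_form {k : ℕ} (x : Fin k → R) (m : Fin k → ℕ) (b : Fin k → R) :
    nest k x m b = (∏ j, x j ^ m j) +
      ∑ i, (∏ j, if j ≤ i then x j ^ m j else 1) * (b i * x i) := by
  induction k with
  | zero => simp [nest]
  | succ k ih =>
    simp only [nest, ih]
    rw [Fin.prod_univ_succ, Fin.sum_univ_succ]
    have h0 : (∏ j : Fin (k+1), if j ≤ (0 : Fin (k+1)) then x j ^ m j else 1) = x 0 ^ m 0 := by
      rw [Fin.prod_univ_succ]
      simp [Fin.le_zero_iff, Fin.succ_ne_zero]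
    rw [h0]
    have hsucc : ∀ i : Fin k,
        (∏ j : Fin (k+1), if j ≤ i.succ then x j ^ m j else 1)
          = x 0 ^ m 0 * ∏ j : Fin k, if j ≤ i then x j.succ ^ m j.succ else 1 := by
      intro i
      rw [Fin.prod_univ_succ]
      simp [Fin.succ_le_succ_iff, Fin.zero_le]
    have hs : ∑ i : Fin k, (∏ j : Fin (k+1), if j ≤ i.succ then x j ^ m j else 1) *
          (b i.succ * x i.succ)
        = ∑ i : Fin k, (x 0 ^ m 0 * ∏ j : Fin k, if j ≤ i then x j.succ ^ m j.succ else 1) *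
          (b i.succ * x i.succ) :=
      Finset.sum_congr rfl (fun i _ => by rw [hsucc i])
    rw [hs, mul_add, mul_add, Finset.mul_sum]
    rw [Finset.sum_congr rfl (fun i (_ : i ∈ Finset.univ) => (by ring :
      x 0 ^ m 0 * ((∏ j : Fin k, if j ≤ i then x j.succ ^ m j.succ else 1) *
        (b i.succ * x i.succ))
      = (x 0 ^ m 0 * ∏ j : Fin k, if j ≤ i then x j.succ ^ m j.succ else 1) *
        (b i.succ * x i.succ)))]
    ring
theorem exists_nest_zero {k : ℕ} {R : Type*} [CommRing R] [Algebra ℂ R]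
    (x : Fin (k+1) → R) (Q : MvPolynomial (Fin (k+1)) ℂ) (hQ : Q ≠ 0)
    (hann : aeval x Q = 0) :
    ∃ m b, nest (k+1) x m b = 0 := by
  classical
  obtain ⟨d, hd, hdmin⟩ := Finset.exists_min_image Q.support
    (fun e => (toLex e : Lex (Fin (k+1) →₀ ℕ))) (support_nonempty.mpr hQ)
  set c : ℂ := coeff d Q with hc
  have hc0 : c ≠ 0 := mem_support_iff.mp hd
  set Q' : MvPolynomial (Fin (k+1)) ℂ := c⁻¹ • Q with hQ'def
  have hsupp' : Q'.support = Q.support := Finsupp.support_smul_eq (inv_ne_zero hc0)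
  have hann' : aeval x Q' = 0 := by rw [hQ'def, map_smul, hann, smul_zero]
  have hcd' : coeff d Q' = 1 := by
    rw [hQ'def, coeff_smul, smul_eq_mul, ← hc, inv_mul_cancel₀ hc0]
  have hP : ∀ e ∈ Q.support, e ≠ d → ∃ i, (∀ j, j < i → d j = e j) ∧ d i < e i := by
    intro e he hne
    have hlt : (toLex d : Lex (Fin (k+1) →₀ ℕ)) < toLex e :=
      lt_of_le_of_ne (hdmin e he) (fun h => hne (by
        simpa using congrArg (fun z : Lex (Fin (k+1) →₀ ℕ) => (ofLex z : Fin (k+1) →₀ ℕ)) h.symm))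
    obtain ⟨i, h1, h2⟩ := Finsupp.Lex.lt_iff.mp hlt
    exact ⟨i, fun j hj => h1 j hj, h2⟩
  set ι : (Fin (k+1) →₀ ℕ) → Fin (k+1) := fun e =>
    if h : ∃ i, (∀ j, j < i → d j = e j) ∧ d i < e i then h.choose else 0 with hιdef
  have hι : ∀ e ∈ Q.support, e ≠ d →
      (∀ j, j < ι e → d j = e j) ∧ d (ι e) < e (ι e) := by
    intro e he hne
    have h := hP e he hne
    simp only [hιdef, dif_pos h]
    exact h.choose_spec
  set tail : (Fin (k+1) →₀ ℕ) → Fin (k+1) → R := fun e i =>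
    x i ^ (e i - d i - 1) * ∏ j, if i < j then x j ^ e j else 1 with htail
  set b : Fin (k+1) → R := fun i =>
    ∑ e ∈ (Q.support.erase d).filter (fun e => ι e = i), coeff e Q' • tail e i with hbdef
  refine ⟨fun i => d i, b, ?_⟩
  have hfac : ∀ e ∈ Q.support, e ≠ d →
      (∏ j, x j ^ e j) =
        (∏ j, if j ≤ ι e then x j ^ d j else 1) * (x (ι e) * tail e (ι e)) := by
    intro e he hne
    obtain ⟨h1, h2⟩ := hι e he hne
    have hterm : ∀ j, x j ^ e j =
        ((if j ≤ ι e then x j ^ d j else 1) *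
          (if j = ι e then x (ι e) * x (ι e) ^ (e (ι e) - d (ι e) - 1) else 1)) *
          (if ι e < j then x j ^ e j else 1) := by
      intro j
      rcases lt_trichotomy j (ι e) with h | h | h
      · simp [h.le, h.ne, not_lt.mpr h.le, h1 j h]
      · rw [h]
        simp only [le_refl, if_pos, if_pos rfl, if_neg (lt_irrefl (ι e)), mul_one]
        have hx : x (ι e) ^ d (ι e) * (x (ι e) * x (ι e) ^ (e (ι e) - d (ι e) - 1))
            = x (ι e) ^ (d (ι e) + (1 + (e (ι e) - d (ι e) - 1))) := by
          rw [pow_add, pow_add, pow_one]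
        rw [hx]
        congr 1
        omega
      · simp [not_le.mpr h, h.ne', h]
    rw [Finset.prod_congr rfl (fun j _ => hterm j), Finset.prod_mul_distrib,
        Finset.prod_mul_distrib, Finset.prod_ite_eq' Finset.univ (ι e)]
    simp only [Finset.mem_univ, if_pos]
    rw [htail]
    ring
  have hQsum : aeval x Q' = ∑ e ∈ Q.support, coeff e Q' • ∏ j, x j ^ e j := by
    conv_lhs => rw [as_sum Q']
    rw [hsupp', map_sum]
    refine Finset.sum_congr rfl fun e _ => ?_
    rw [aeval_monomial, Algebra.smul_def]
    congr 1
    exact Finsupp.prod_fintype _ _ (fun i => pow_zero _)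
  have hsplit : ∑ e ∈ Q.support, coeff e Q' • ∏ j, x j ^ e j
      = (∏ j, x j ^ d j) + ∑ e ∈ Q.support.erase d, coeff e Q' • ∏ j, x j ^ e j := by
    rw [← Finset.add_sum_erase _ _ hd, hcd', one_smul]
  have hfib : ∑ e ∈ Q.support.erase d, coeff e Q' • ∏ j, x j ^ e j
      = ∑ i, (∏ j, if j ≤ i then x j ^ d j else 1) * (b i * x i) := by
    rw [← Finset.sum_fiberwise (Q.support.erase d) ι (fun e => coeff e Q' • ∏ j, x j ^ e j)]
    refine Finset.sum_congr rfl fun i _ => ?_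
    rw [hbdef]
    simp only [Finset.sum_mul, Finset.mul_sum]
    refine Finset.sum_congr rfl fun e he => ?_
    obtain ⟨he1, hei⟩ := Finset.mem_filter.mp he
    have hne := Finset.ne_of_mem_erase he1
    have hes := Finset.mem_of_mem_erase he1
    rw [hfac e hes hne, hei]
    rw [smul_mul_assoc, mul_smul_comm, mul_comm (tail e i) (x i)]
  rw [nest_closed_form]
  have hmeq : (∏ j, x j ^ (fun i => d i) j) = ∏ j, x j ^ d j := rfl
  calc (∏ j, x j ^ (fun i => d i) j) +
        ∑ i, (∏ j, if j ≤ i then x j ^ (fun i => d i) j else 1) * (b i * x i)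
      = (∏ j, x j ^ d j) + ∑ i, (∏ j, if j ≤ i then x j ^ d j else 1) * (b i * x i) := rfl
    _ = aeval x Q' := by rw [hQsum, hsplit, hfib]
    _ = 0 := hann'
theorem exists_annihilator {n : ℕ} (g : Fin (n+1) → MvPolynomial (Fin n) ℂ) :
    ∃ Q : MvPolynomial (Fin (n+1)) ℂ, Q ≠ 0 ∧ aeval g Q = 0 := by
  classical
  set D : ℕ := (Finset.univ.sup fun i => (g i).totalDegree) + 1 with hD
  set A : ℕ := (n+1) * D + 1 with hA
  set t : ℕ := A ^ n with ht
  set M : ℕ := (n+1) * t * D with hM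
  have ht1 : 1 ≤ t := Nat.one_le_pow _ _ (by omega)
  set S : Finset (Fin (n+1) → ℕ) := Fintype.piFinset fun _ => Finset.range (t+1) with hS
  set Sbox : Finset (Fin n →₀ ℕ) :=
    (Fintype.piFinset fun _ : Fin n => Finset.range (M+1)).map
      (Finsupp.equivFunOnFinite.symm.toEmbedding) with hSbox
  set W : Submodule ℂ (MvPolynomial (Fin n) ℂ) := restrictSupport ℂ ↑Sbox with hW
  have hdeg : ∀ e ∈ S, (∏ i, g i ^ e i).totalDegree ≤ M := by
    intro e he
    refine le_trans (totalDegree_finset_prod _ _) ?_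
    have hbound : ∀ i : Fin (n+1), (g i ^ e i).totalDegree ≤ t * D := by
      intro i
      refine le_trans (totalDegree_pow _ _) ?_
      have h1 : e i ≤ t := by
        have := (Fintype.mem_piFinset.mp he) i
        simpa [Nat.lt_succ_iff] using this
      have h2 : (g i).totalDegree ≤ D :=
        le_trans (Finset.le_sup (f := fun i => (g i).totalDegree) (Finset.mem_univ i))
          (Nat.le_succ _)
      exact Nat.mul_le_mul h1 h2
    calc ∑ i, (g i ^ e i).totalDegree ≤ ∑ _i : Fin (n+1), t * D :=
          Finset.sum_le_sum fun i _ => hbound i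
      _ = (n+1) * (t * D) := by simp [Finset.sum_const, mul_comm]
      _ = M := by rw [hM]; ring
  have hmemW : ∀ e ∈ S, (∏ i, g i ^ e i) ∈ W := by
    intro e he
    rw [hW]
    intro dd hdd
    have hddle : ∀ j, dd j ≤ M := by
      intro j
      have h1 : dd j ≤ dd.sum fun _ e => e := by
        rcases eq_or_ne (dd j) 0 with h | h
        · simp [h]
        · exact Finset.single_le_sum (f := fun a => dd a) (fun _ _ => Nat.zero_le _)
            (Finsupp.mem_support_iff.mpr h)
      exact le_trans h1 (le_trans (le_totalDegree hdd) (hdeg e he))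
    have hmem : dd ∈ Sbox := by
      rw [hSbox, Finset.mem_map_equiv, Fintype.mem_piFinset]
      intro j
      simp only [Finsupp.equivFunOnFinite_apply, Finset.mem_range, Nat.lt_succ_iff]
      exact hddle j
    exact Finset.mem_coe.mpr hmem
  have hcards : Sbox.card = (M+1)^n := by
    rw [hSbox, Finset.card_map, Fintype.card_piFinset]
    simp
  have hrank : Module.finrank ℂ W = (M+1)^n := by
    rw [hW, Module.finrank_eq_card_basis (basisRestrictSupport ℂ (↑Sbox : Set (Fin n →₀ ℕ)))]
    rw [← hcards]
    simp
  have harith : (M+1)^n < (t+1)^(n+1) := by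
    have h1 : M + 1 ≤ t * A := by
      have : t * A = (n+1) * t * D + t := by rw [hA]; ring
      omega
    calc (M+1)^n ≤ (t*A)^n := Nat.pow_le_pow_left h1 n
      _ = t^n * A^n := mul_pow _ _ _
      _ ≤ t^n * t := by rw [ht]
      _ = t^(n+1) := (pow_succ t n).symm
      _ < (t+1)^(n+1) := Nat.pow_lt_pow_left (Nat.lt_succ_self t) (Nat.succ_ne_zero n)
  have hnli : ¬ LinearIndependent ℂ (fun e : ↥S => ∏ i, g i ^ (e.1 i)) := by
    intro hli
    haveI : Module.Finite ℂ W := Module.Finite.of_basis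
      (basisRestrictSupport ℂ (↑Sbox : Set (Fin n →₀ ℕ)))
    have hliW : LinearIndependent ℂ
        (fun e : ↥S => (⟨∏ i, g i ^ (e.1 i), hmemW e.1 e.2⟩ : W)) :=
      LinearIndependent.of_comp W.subtype hli
    have hcard := hliW.fintype_card_le_finrank
    rw [hrank] at hcard
    have hScard : Fintype.card ↥S = (t+1)^(n+1) := by
      rw [Fintype.card_coe, hS, Fintype.card_piFinset]
      simp
    rw [hScard] at hcard
    omega
  rw [Fintype.not_linearIndependent_iff] at hnli
  obtain ⟨cc, hsum, e0, he0⟩ := hnli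
  refine ⟨∑ e : ↥S, monomial (Finsupp.equivFunOnFinite.symm e.1) (cc e), ?_, ?_⟩
  · intro hzero
    have hcoeff := congrArg (coeff (Finsupp.equivFunOnFinite.symm e0.1)) hzero
    have hsingle : ∀ e : ↥S, e ∈ Finset.univ → e ≠ e0 →
        coeff (Finsupp.equivFunOnFinite.symm e0.1)
          (monomial (Finsupp.equivFunOnFinite.symm e.1) (cc e)) = 0 := by
      intro e _ hne
      rw [coeff_monomial, if_neg]
      intro heq
      exact hne (Subtype.ext (Finsupp.equivFunOnFinite.symm.injective heq))
    rw [coeff_sum, Finset.sum_eq_single e0 hsingle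
        (fun h => absurd (Finset.mem_univ e0) h),
      coeff_monomial, if_pos rfl, coeff_zero] at hcoeff
    exact he0 hcoeff
  · rw [map_sum]
    rw [← hsum]
    refine Finset.sum_congr rfl fun e _ => ?_
    rw [aeval_monomial, Algebra.smul_def]
    congr 1
    rw [Finsupp.prod_fintype _ _ (fun i => pow_zero _)]
    refine Finset.prod_congr rfl fun i _ => ?_
    simp

theorem mvPoly_dim_le (n : ℕ) :
    ringKrullDim (MvPolynomial (Fin n) ℂ) ≤ ((n : ℕ∞) : WithBot ℕ∞) :=
  CL_dim_le fun x => by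
    obtain ⟨Q, hQ, h0⟩ := exists_annihilator x
    exact exists_nest_zero x Q hQ h0

theorem quot_dim_ne_top (n : ℕ) (I : Ideal (MvPolynomial (Fin n) ℂ)) :
    ringKrullDim (MvPolynomial (Fin n) ℂ ⧸ I) ≠ ⊤ := by
  intro htop
  have h1 : ringKrullDim (MvPolynomial (Fin n) ℂ ⧸ I) ≤ ringKrullDim (MvPolynomial (Fin n) ℂ) :=
    ringKrullDim_quotient_le I
  have h2 := le_trans h1 (mvPoly_dim_le n)
  rw [htop] at h2
  have : ((⊤ : ℕ∞) : WithBot ℕ∞) ≤ ((n : ℕ∞) : WithBot ℕ∞) := by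
    convert h2 using 2
    rfl
  simp at this
  exact ENat.coe_ne_top n (WithBot.coe_injective this)

end Stmt17Aux

theorem neg_one_le_zdim {σ K : Type} [CommRing K] (S : Set (σ → K)) : -1 ≤ zdim S := by
  classical
  rw [zdim]
  split
  · exact le_refl _
  · have : (0:ℤ) ≤ (ENat.toNat (WithBot.unbotD 0
        (ringKrullDim (MvPolynomial σ K ⧸ vIdeal S))) : ℤ) := Int.ofNat_nonneg _
    omega

theorem zdim_mono {n : ℕ} {S T : Set (Fin n → ℂ)} (h : S ⊆ T) : zdim S ≤ zdim T := by
  classical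
  by_cases hS : S = ∅
  · rw [zdim, if_pos hS]
    exact neg_one_le_zdim T
  · have hT : T ≠ ∅ := by
      intro h'
      exact hS (Set.eq_empty_iff_forall_notMem.mpr fun x hx =>
        Set.eq_empty_iff_forall_notMem.mp h' x (h hx))
    rw [zdim, zdim, if_neg hS, if_neg hT]
    have hIdeal : vIdeal T ≤ vIdeal S := fun f hf x hx => hf x (h hx)
    have hsurj : Function.Surjective (Ideal.Quotient.factor hIdeal) := by
      intro y
      obtain ⟨x, rfl⟩ := Ideal.Quotient.mk_surjective y
      exact ⟨Ideal.Quotient.mk _ x, by simp⟩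
    have hdim : ringKrullDim (MvPolynomial (Fin n) ℂ ⧸ vIdeal S) ≤
        ringKrullDim (MvPolynomial (Fin n) ℂ ⧸ vIdeal T) :=
      ringKrullDim_le_of_surjective _ hsurj
    have hbt : ringKrullDim (MvPolynomial (Fin n) ℂ ⧸ vIdeal T) ≠ (⊤ : WithBot ℕ∞) :=
      Stmt17Aux.quot_dim_ne_top n _
    generalize hA : ringKrullDim (MvPolynomial (Fin n) ℂ ⧸ vIdeal S) = a at hdim ⊢
    generalize hB : ringKrullDim (MvPolynomial (Fin n) ℂ ⧸ vIdeal T) = b at hdim hbt ⊢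
    induction a with
    | bot =>
      have : (0:ℤ) ≤ (ENat.toNat (WithBot.unbotD 0 b) : ℤ) := Int.ofNat_nonneg _
      simpa using this
    | coe a' =>
      induction b with
      | bot => exact absurd hdim (by simp)
      | coe b' =>
        have hab : a' ≤ b' := by exact_mod_cast hdim
        have hb' : b' ≠ ⊤ := fun hh => hbt (by rw [hh]; rfl)
        simp only [WithBot.unbotD_coe]
        exact_mod_cast ENat.toNat_le_toNat hab hb'

-- rank lemma: nonzero left kernel vector implies rank < number of rows
theorem rank_lt_of_vecMul_zero {s n : ℕ} (A : Matrix (Fin s) (Fin n) ℂ)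
    (c : Fin s → ℂ) (hc : c ≠ 0) (hvm : Matrix.vecMul c A = 0) (hs : 0 < s) :
    A.rank < s := by
  have hmv : A.transpose.mulVec c = 0 := by
    rw [← Matrix.vecMul_transpose]
    simpa using hvm
  have hker : c ∈ LinearMap.ker (A.transpose.mulVecLin) := by
    rw [LinearMap.mem_ker, Matrix.mulVecLin_apply, hmv]
  have hkerpos : 0 < Module.finrank ℂ (LinearMap.ker (A.transpose.mulVecLin)) := by
    rw [Module.finrank_pos_iff]
    exact nontrivial_of_ne (⟨c, hker⟩ : LinearMap.ker (A.transpose.mulVecLin)) 0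
      (fun hh => hc (by simpa using congrArg Subtype.val hh))
  have hrn := LinearMap.finrank_range_add_finrank_ker (A.transpose.mulVecLin)
  have hdom : Module.finrank ℂ (Fin s → ℂ) = s := by simp
  rw [hdom] at hrn
  have hrt : A.transpose.rank = Module.finrank ℂ (LinearMap.range A.transpose.mulVecLin) := rfl
  have : A.rank = A.transpose.rank := (Matrix.rank_transpose A).symm
  omega

/-- Lemma `singlocus`. For `a ≠ 0`, if `ℓ = deg_w(g_a)` then `ℓ ∈ J` and
the singular locus of the top `w`-weighted part of `g_a` has dimension at most `s_{wℓ}`. -/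
theorem stmt17 (n : ℕ) (w : Fin n → ℕ) (hw : ∀ u, 1 ≤ w u)
    (J : Finset ℕ) (hJ : J.Nonempty) (hJ1 : ∀ i ∈ J, 1 ≤ i)
    (r : ℕ → ℕ) (hr : ∀ i ∈ J, 1 ≤ r i)
    (f : (i : ℕ) → Fin (r i) → MvPolynomial (Fin n) ℂ)
    (hfc : ∀ i ∈ J, ∀ j, (f i j).totalDegree ≠ 0)
    (hfd : ∀ i ∈ J, ∀ j, MvPolynomial.weightedTotalDegree w (f i j) = i)
    (hlin : LinearIndependent ℂ fun q : Σ i : ↥J, Fin (r i.1) =>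
      MvPolynomial.weightedHomogeneousComponent w q.1.1 (f q.1.1 q.2))
    (a : (i : ↥J) → Fin (r i.1) → ℂ) (ha : a ≠ 0) :
    MvPolynomial.weightedTotalDegree w
        (∑ i : ↥J, ∑ j : Fin (r i.1), MvPolynomial.C (a i j) * f i.1 j) ∈ J ∧
    zdim {x : Fin n → ℂ | ∀ u : Fin n,
        MvPolynomial.eval x (MvPolynomial.pderiv u
          (MvPolynomial.weightedHomogeneousComponent w
            (MvPolynomial.weightedTotalDegree w
              (∑ i : ↥J, ∑ j : Fin (r i.1), MvPolynomial.C (a i j) * f i.1 j))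
            (∑ i : ↥J, ∑ j : Fin (r i.1), MvPolynomial.C (a i j) * f i.1 j))) = 0} ≤
    zdim (BSing fun j : Fin (r (MvPolynomial.weightedTotalDegree w
        (∑ i : ↥J, ∑ j : Fin (r i.1), MvPolynomial.C (a i j) * f i.1 j))) =>
      MvPolynomial.weightedHomogeneousComponent w
        (MvPolynomial.weightedTotalDegree w
          (∑ i : ↥J, ∑ j : Fin (r i.1), MvPolynomial.C (a i j) * f i.1 j))
        (f (MvPolynomial.weightedTotalDegree w
          (∑ i : ↥J, ∑ j : Fin (r i.1), MvPolynomial.C (a i j) * f i.1 j)) j)) := by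
  classical
  classical
  set g : MvPolynomial (Fin n) ℂ :=
    ∑ i : ↥J, ∑ j : Fin (r i.1), MvPolynomial.C (a i j) * f i.1 j with hg
  have hane : ∃ i : ↥J, a i ≠ 0 := by
    by_contra hc
    push_neg at hc
    exact ha (funext fun i => hc i)
  set T : Finset ↥J := Finset.univ.filter (fun i => a i ≠ 0) with hT
  have hTne : T.Nonempty := ⟨hane.choose, by simp [hT, hane.choose_spec]⟩
  obtain ⟨i0, hi0T, hi0max⟩ := Finset.exists_max_image T (fun i => (i.1 : ℕ)) hTne
  have ha0 : a i0 ≠ 0 := by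
    have := Finset.mem_filter.mp hi0T
    exact this.2
  have hmax : ∀ i : ↥J, a i ≠ 0 → (i.1 : ℕ) ≤ i0.1 := fun i hi =>
    hi0max i (Finset.mem_filter.mpr ⟨Finset.mem_univ i, hi⟩)
  have hcomp0 : ∀ (i : ↥J) (j : Fin (r i.1)) (Dd : ℕ), (i.1 : ℕ) < Dd →
      weightedHomogeneousComponent w Dd (f i.1 j) = 0 := by
    intro i j Dd hlt
    apply weightedHomogeneousComponent_eq_zero
    rw [hfd i.1 i.2 j]
    exact hlt
  have hgcomp : ∀ Dd : ℕ, weightedHomogeneousComponent w Dd g =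
      ∑ i : ↥J, ∑ j, C (a i j) * weightedHomogeneousComponent w Dd (f i.1 j) := by
    intro Dd
    rw [hg, map_sum]
    refine Finset.sum_congr rfl fun i _ => ?_
    rw [map_sum]
    exact Finset.sum_congr rfl fun j _ => weightedHomogeneousComponent_C_mul (f i.1 j) Dd (a i j)
  have htop : weightedHomogeneousComponent w i0.1 g
      = ∑ j, C (a i0 j) * weightedHomogeneousComponent w i0.1 (f i0.1 j) := by
    rw [hgcomp]
    rw [Finset.sum_eq_single i0]
    · intro i _ hne
      by_cases hai : a i = 0
      · refine Finset.sum_eq_zero fun j _ => ?_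
        rw [show a i j = 0 from congrFun hai j]
        simp
      · have hlt : (i.1 : ℕ) < i0.1 :=
          lt_of_le_of_ne (hmax i hai) (fun hh => hne (Subtype.ext hh))
        refine Finset.sum_eq_zero fun j _ => ?_
        rw [hcomp0 i j i0.1 hlt, mul_zero]
    · intro h
      exact absurd (Finset.mem_univ i0) h
  have hlinslice : LinearIndependent ℂ (fun j : Fin (r i0.1) =>
      weightedHomogeneousComponent w i0.1 (f i0.1 j)) := by
    have hinj : Function.Injective
        (fun j : Fin (r i0.1) => (⟨i0, j⟩ : Σ i : ↥J, Fin (r i.1))) := by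
      intro j1 j2 hj
      exact eq_of_heq (Sigma.mk.inj_iff.mp hj).2
    exact hlin.comp (fun j : Fin (r i0.1) => (⟨i0, j⟩ : Σ i : ↥J, Fin (r i.1))) hinj
  have htopne : weightedHomogeneousComponent w i0.1 g ≠ 0 := by
    rw [htop]
    intro hzero
    rw [Fintype.linearIndependent_iff] at hlinslice
    have hall := hlinslice (fun j => a i0 j) ?_
    · exact ha0 (funext hall)
    · rw [← hzero]
      exact Finset.sum_congr rfl fun j _ => by rw [smul_eq_C_mul]
  have hle : weightedTotalDegree w g ≤ (i0.1 : ℕ) := by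
    rw [weightedTotalDegree]
    apply Finset.sup_le
    intro dd hdd
    have hcd : coeff dd g ≠ 0 := mem_support_iff.mp hdd
    rw [hg] at hcd
    have h1 : ∃ i : ↥J, (∑ j, C (a i j) * f i.1 j).coeff dd ≠ 0 := by
      by_contra hc
      push_neg at hc
      apply hcd
      rw [coeff_sum]
      exact Finset.sum_eq_zero fun i _ => hc i
    obtain ⟨i, hi⟩ := h1
    have h2 : ∃ j : Fin (r i.1), (C (a i j) * f i.1 j).coeff dd ≠ 0 := by
      by_contra hc
      push_neg at hc
      apply hi
      rw [coeff_sum]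
      exact Finset.sum_eq_zero fun j _ => hc j
    obtain ⟨j, hj⟩ := h2
    rw [coeff_C_mul] at hj
    have haij : a i j ≠ 0 := fun hh => hj (by rw [hh, zero_mul])
    have hfij : coeff dd (f i.1 j) ≠ 0 := fun hh => hj (by rw [hh, mul_zero])
    have hwt : (Finsupp.weight w) dd ≤ weightedTotalDegree w (f i.1 j) :=
      le_weightedTotalDegree w (mem_support_iff.mpr hfij)
    rw [hfd i.1 i.2 j] at hwt
    have : a i ≠ 0 := fun hh => haij (congrFun hh j)
    exact le_trans hwt (hmax i this)
  have hge : (i0.1 : ℕ) ≤ weightedTotalDegree w g := by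
    by_contra hc
    push_neg at hc
    apply htopne
    apply weightedHomogeneousComponent_eq_zero
    exact hc
  have hdeg : weightedTotalDegree w g = (i0.1 : ℕ) := le_antisymm hle hge
  rw [hdeg]
  refine ⟨i0.2, ?_⟩
  apply zdim_mono
  intro x hx
  simp only [Set.mem_setOf_eq] at hx
  show (Matrix.of fun (jj : Fin (r i0.1)) (u : Fin n) =>
      MvPolynomial.eval x (MvPolynomial.pderiv u
        (MvPolynomial.weightedHomogeneousComponent w i0.1 (f i0.1 jj)))).rank < r i0.1
  have hvec : ∀ u : Fin n, ∑ jj : Fin (r i0.1),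
      a i0 jj * MvPolynomial.eval x (MvPolynomial.pderiv u
        (weightedHomogeneousComponent w i0.1 (f i0.1 jj))) = 0 := by
    intro u
    have hxu := hx u
    rw [htop, map_sum, map_sum] at hxu
    rw [← hxu]
    refine Finset.sum_congr rfl fun jj _ => ?_
    rw [pderiv_C_mul, eval_mul, eval_C]
  have hvm : Matrix.vecMul (a i0) (Matrix.of fun (jj : Fin (r i0.1)) (u : Fin n) =>
      MvPolynomial.eval x (MvPolynomial.pderiv u
        (MvPolynomial.weightedHomogeneousComponent w i0.1 (f i0.1 jj)))) = 0 := by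
    funext u
    have := hvec u
    simp only [Matrix.vecMul, dotProduct, Matrix.of_apply, Pi.zero_apply]
    exact this
  exact rank_lt_of_vecMul_zero _ (a i0) ha0 hvm (hr i0.1 i0.2)
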